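/- Suppose τ₁ ln R = τ₂/2 (equivalently R = exp(τ₂/(2τ₁))). Then for every constant vector v ∈ ℝ² and every x ∈ D, ∫_{∂D} G⁰(x − y) v dσ(y) = 0. In particular, the elastostatic single-layer operator S_D : φ ↦ ∫_{∂D} G⁰(· − y) φ(y) dσ(y) on the disk annihilates all constant densities and hence is not injective on L²(∂D)². -/

import Mathlib

open MeasureTheory

/-- `τ₁ = (1/2)(1/μ + 1/(λ+2μ))`. -/
noncomputable def tau1 (lam mu : ℝ) : ℝ := (1 / 2) * (1 / mu + 1 / (lam + 2 * mu))

/-- `τ₂ = (1/2)(1/μ − 1/(λ+2μ))`. -/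
noncomputable def tau2 (lam mu : ℝ) : ℝ := (1 / 2) * (1 / mu - 1 / (lam + 2 * mu))

/-- The Kelvin matrix (elastostatic fundamental solution of the Lamé system):
`G⁰_{ij}(x) = (τ₁/(2π)) δ_{ij} ln|x| − (τ₂/(2π)) x_i x_j / |x|²`. -/
noncomputable def KelvinG0 (lam mu : ℝ) (x : EuclideanSpace ℝ (Fin 2)) :
    Matrix (Fin 2) (Fin 2) ℝ := fun i j =>
  tau1 lam mu / (2 * Real.pi) * (if i = j then Real.log ‖x‖ else 0)
    - tau2 lam mu / (2 * Real.pi) * (x i * x j / ‖x‖ ^ 2)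


open Metric Complex intervalIntegral

private lemma meanValue (f : ℂ → ℂ) (hf : DifferentiableOn ℂ f (Metric.closedBall 0 1)) :
    (∫ θ in (0:ℝ)..(2*Real.pi), f (Complex.exp (θ * Complex.I))) = 2 * Real.pi * f 0 := by
  have h1 : DiffContOnCl ℂ f (Metric.ball 0 1) := by
    apply DifferentiableOn.diffContOnCl
    rwa [closure_ball (0:ℂ) one_ne_zero]
  have h2 := h1.circleIntegral_sub_inv_smul (Metric.mem_ball_self one_pos)
  rw [circleIntegral] at h2
  simp only [deriv_circleMap, sub_zero, smul_eq_mul] at h2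
  have hne : ∀ θ : ℝ, circleMap 0 1 θ ≠ 0 := by
    intro θ
    simp [circleMap_zero, Complex.exp_ne_zero]
  have h3 : ∀ θ ∈ Set.uIcc (0:ℝ) (2*Real.pi),
      circleMap 0 1 θ * I * ((circleMap 0 1 θ)⁻¹ * f (circleMap 0 1 θ))
        = I * f (circleMap 0 1 θ) := by
    intro θ _
    field_simp [hne θ]
  rw [intervalIntegral.integral_congr h3, intervalIntegral.integral_const_mul] at h2
  have h4 : (I:ℂ) * ∫ θ in (0:ℝ)..(2*Real.pi), f (circleMap 0 1 θ)
      = I * (2 * Real.pi * f 0) := by rw [h2]; ring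
  have h5 := mul_left_cancel₀ I_ne_zero h4
  rw [← h5]
  apply intervalIntegral.integral_congr
  intro θ _
  simp [circleMap_zero]

lemma slit_aux {b ζ : ℂ} (hb : ‖b‖ < 1) (hζ : ‖ζ‖ ≤ 1) :
    0 < (1 - b * ζ).re := by
  have h1 : (b * ζ).re ≤ ‖b * ζ‖ := Complex.re_le_norm _
  have h2 : ‖b * ζ‖ < 1 := by
    rw [norm_mul]
    calc ‖b‖ * ‖ζ‖ ≤ ‖b‖ * 1 := by
          exact mul_le_mul_of_nonneg_left hζ (norm_nonneg _)
      _ < 1 := by simpa using hb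
  simp only [Complex.sub_re, Complex.one_re]
  linarith

private lemma integral_log_abs (R : ℝ) (hR : 0 < R) (a w : ℂ) (ha : ‖a‖ < R)
    (hw : ‖w‖ = R) :
    (∫ θ in (0:ℝ)..(2*Real.pi),
        Real.log ‖a - Complex.exp (θ * Complex.I) * w‖)
      = 2 * Real.pi * Real.log R := by
  have hw0 : w ≠ 0 := by
    intro h; rw [h, norm_zero] at hw; linarith
  have hcw0 : (starRingEnd ℂ) w ≠ 0 := by simpa using hw0
  set b : ℂ := (starRingEnd ℂ) a / (starRingEnd ℂ) w with hb
  have habsb : ‖b‖ < 1 := by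
    rw [hb, norm_div, Complex.norm_conj, Complex.norm_conj, hw]
    exact (div_lt_one hR).2 ha
  have hdiff : DifferentiableOn ℂ (fun ζ => Complex.log (1 - b * ζ)) (Metric.closedBall 0 1) := by
    intro ζ hζ
    have hζ1 : ‖ζ‖ ≤ 1 := by
      simpa [Complex.norm_def, Metric.mem_closedBall, dist_zero_right] using hζ
    have hd : DifferentiableAt ℂ (fun ζ : ℂ => 1 - b * ζ) ζ := by fun_prop
    exact (hd.clog (Or.inl (slit_aux habsb hζ1))).differentiableWithinAt
  have hmv := meanValue _ hdiff
  simp only [mul_zero, sub_zero, Complex.log_one] at hmv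
  have hcont : Continuous fun θ : ℝ => Complex.log (1 - b * Complex.exp (θ * Complex.I)) := by
    apply Continuous.clog (by fun_prop)
    intro θ
    exact Or.inl (slit_aux habsb (le_of_eq (Complex.norm_exp_ofReal_mul_I θ)))
  have hpt : ∀ θ ∈ Set.uIcc (0:ℝ) (2*Real.pi),
      Real.log ‖a - Complex.exp (θ * Complex.I) * w‖
        = Real.log R + (Complex.log (1 - b * Complex.exp (θ * Complex.I))).re := by
    intro θ _
    set e : ℂ := Complex.exp (θ * Complex.I) with he
    have habe : ‖e‖ = 1 := Complex.norm_exp_ofReal_mul_I θ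
    have he0 : e ≠ 0 := Complex.exp_ne_zero _
    have hkey : ‖a - e * w‖ = R * ‖1 - b * e‖ := by
      have h1 : (1 : ℂ) - b * e = ((starRingEnd ℂ) w - (starRingEnd ℂ) a * e) / (starRingEnd ℂ) w := by
        rw [hb]; field_simp
      have h2 : ‖(starRingEnd ℂ) w - (starRingEnd ℂ) a * e‖
          = ‖a - e * w‖ := by
        have h3 : (starRingEnd ℂ) ((starRingEnd ℂ) w - (starRingEnd ℂ) a * e)
            = w - a * (starRingEnd ℂ) e := by
          simp [map_sub, map_mul]
        have h4 : ‖(starRingEnd ℂ) w - (starRingEnd ℂ) a * e‖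
            = ‖w - a * (starRingEnd ℂ) e‖ := by
          rw [← h3, Complex.norm_conj]
        rw [h4]
        have h5 : (w - a * (starRingEnd ℂ) e) * e = w * e - a := by
          have : (starRingEnd ℂ) e * e = 1 := by
            rw [mul_comm, Complex.mul_conj, ← Complex.sq_norm, habe]
            norm_num
          ring_nf
          rw [mul_assoc, this]  -- may need adjustment
          ring
        calc ‖w - a * (starRingEnd ℂ) e‖
            = ‖w - a * (starRingEnd ℂ) e‖ * ‖e‖ := by rw [habe, mul_one]
          _ = ‖(w - a * (starRingEnd ℂ) e) * e‖ := (norm_mul _ _).symm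
          _ = ‖w * e - a‖ := by rw [h5]
          _ = ‖a - e * w‖ := by rw [norm_sub_rev]; ring_nf
      rw [h1, norm_div, Complex.norm_conj, hw, h2]
      field_simp
    have hbe0 : (1 : ℂ) - b * e ≠ 0 := by
      intro h
      have := slit_aux habsb (le_of_eq habe)
      rw [h] at this; simp at this
    rw [hkey, Real.log_mul (ne_of_gt hR) (norm_ne_zero_iff.mpr hbe0), Complex.log_re]
  rw [intervalIntegral.integral_congr hpt]
  rw [intervalIntegral.integral_add intervalIntegrable_const (by
    exact (Complex.continuous_re.comp hcont).intervalIntegrable _ _)]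
  have hre : (∫ θ in (0:ℝ)..(2*Real.pi),
      (Complex.log (1 - b * Complex.exp (θ * Complex.I))).re)
      = (Complex.reCLM : ℂ →L[ℝ] ℝ) (∫ θ in (0:ℝ)..(2*Real.pi),
          Complex.log (1 - b * Complex.exp (θ * Complex.I))) := by
    rw [← ContinuousLinearMap.intervalIntegral_comp_comm _ (hcont.intervalIntegrable _ _)]
    rfl
  rw [hre, hmv]
  simp [mul_comm]

lemma integral_ratio (R : ℝ) (hR : 0 < R) (a w : ℂ) (ha : ‖a‖ < R)
    (hw : ‖w‖ = R) :
    (∫ θ in (0:ℝ)..(2*Real.pi),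
        (a - Complex.exp (θ * Complex.I) * w) ^ 2
          / ((Complex.normSq (a - Complex.exp (θ * Complex.I) * w) : ℝ) : ℂ)) = 0 := by
  have hden : ∀ ζ : ℂ, ‖ζ‖ ≤ 1 →
      (starRingEnd ℂ) a * ζ - (starRingEnd ℂ) w ≠ 0 := by
    intro ζ hζ h
    have h2 : (starRingEnd ℂ) w = (starRingEnd ℂ) a * ζ := by linear_combination -h
    have h3 : R = ‖a‖ * ‖ζ‖ := by
      rw [← hw, ← Complex.norm_conj w, h2, norm_mul, Complex.norm_conj]
    nlinarith [norm_nonneg a, norm_nonneg ζ]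
  have hdiff : DifferentiableOn ℂ
      (fun ζ => (a - w * ζ) * ζ / ((starRingEnd ℂ) a * ζ - (starRingEnd ℂ) w))
      (Metric.closedBall 0 1) := by
    intro ζ hζ
    have hζ1 : ‖ζ‖ ≤ 1 := by
      simpa [Complex.norm_def, Metric.mem_closedBall, dist_zero_right] using hζ
    have h1 : DifferentiableAt ℂ (fun ζ : ℂ => (a - w * ζ) * ζ) ζ := by fun_prop
    have h2 : DifferentiableAt ℂ (fun ζ : ℂ => (starRingEnd ℂ) a * ζ - (starRingEnd ℂ) w) ζ := by
      fun_prop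
    exact (h1.div h2 (hden ζ hζ1)).differentiableWithinAt
  have hmv := meanValue _ hdiff
  simp only [mul_zero, zero_div, sub_zero, zero_mul, mul_one] at hmv
  rw [← hmv]
  apply intervalIntegral.integral_congr
  intro θ _
  set e : ℂ := Complex.exp (θ * Complex.I) with he
  have habe : ‖e‖ = 1 := Complex.norm_exp_ofReal_mul_I θ
  have he0 : e ≠ 0 := Complex.exp_ne_zero _
  have hce : (starRingEnd ℂ) e * e = 1 := by
    rw [mul_comm, Complex.mul_conj, ← Complex.sq_norm, habe]; norm_num
  set z : ℂ := a - e * w with hz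
  have hzne : z ≠ 0 := by
    intro h
    have : a = e * w := by linear_combination h
    rw [this, norm_mul, habe, one_mul, hw] at ha
    exact lt_irrefl _ ha
  have hczne : (starRingEnd ℂ) z ≠ 0 := by
    simpa using hzne
  have hdenz : (starRingEnd ℂ) a * e - (starRingEnd ℂ) w = (starRingEnd ℂ) z * e := by
    have h1 : (starRingEnd ℂ) z * e
        = (starRingEnd ℂ) a * e - (starRingEnd ℂ) w * ((starRingEnd ℂ) e * e) := by
      rw [hz]; simp only [map_sub, map_mul]; ring
    rw [h1, hce, mul_one]
  show (a - e * w) ^ 2 / ((Complex.normSq (a - e * w) : ℝ) : ℂ)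
      = (a - w * e) * e / ((starRingEnd ℂ) a * e - (starRingEnd ℂ) w)
  rw [hdenz, ← hz, show a - w * e = z by rw [hz]; ring, ← Complex.mul_conj]
  field_simp

lemma kelvin_key (lam mu R : ℝ) (hR : 0 < R)
    (heq : tau1 lam mu * Real.log R = tau2 lam mu / 2)
    (v : Fin 2 → ℝ) (a w : ℂ) (ha : ‖a‖ < R) (hw : ‖w‖ = R) :
    (∫ θ in (0:ℝ)..(2*Real.pi),
        (KelvinG0 lam mu (Complex.orthonormalBasisOneI.repr
          (a - Complex.exp (θ * Complex.I) * w))).mulVec v) = 0 := by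
  set z : ℝ → ℂ := fun θ => a - Complex.exp (θ * Complex.I) * w with hzdef
  have hz0 : ∀ θ : ℝ, z θ ≠ 0 := by
    intro θ h
    have h2 : a = Complex.exp (θ * Complex.I) * w := sub_eq_zero.1 h
    rw [h2, norm_mul, Complex.norm_exp_ofReal_mul_I, one_mul, hw] at ha
    exact lt_irrefl _ ha
  have hzcont : Continuous z := by fun_prop
  have hn_pos : ∀ θ, 0 < Complex.normSq (z θ) := fun θ => Complex.normSq_pos.2 (hz0 θ)
  have hn_ne : ∀ θ, Complex.normSq (z θ) ≠ 0 := fun θ => ne_of_gt (hn_pos θ)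
  have habs_ne : ∀ θ, ‖z θ‖ ≠ 0 := fun θ => norm_ne_zero_iff.mpr (hz0 θ)
  have hncont : Continuous fun θ => Complex.normSq (z θ) := Complex.continuous_normSq.comp hzcont
  have hlogcont : Continuous fun θ => Real.log ‖z θ‖ := by
    apply Real.continuousOn_log.comp_continuous (continuous_norm.comp hzcont)
    intro θ; simpa using habs_ne θ
  have hrecont : Continuous fun θ => (z θ).re := Complex.continuous_re.comp hzcont
  have himcont : Continuous fun θ => (z θ).im := Complex.continuous_im.comp hzcont
  have hc00 : Continuous fun θ => (z θ).re * (z θ).re / Complex.normSq (z θ) :=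
    (hrecont.mul hrecont).div hncont hn_ne
  have hc01 : Continuous fun θ => (z θ).re * (z θ).im / Complex.normSq (z θ) :=
    (hrecont.mul himcont).div hncont hn_ne
  have hc11 : Continuous fun θ => (z θ).im * (z θ).im / Complex.normSq (z θ) :=
    (himcont.mul himcont).div hncont hn_ne
  set Q : ℝ → ℂ := fun θ => (z θ) ^ 2 / ((Complex.normSq (z θ) : ℝ) : ℂ) with hQdef
  have hQcont : Continuous Q := by
    apply Continuous.div (by fun_prop) (by fun_prop)
    intro θ
    simpa using hn_ne θ
  have hQint : (∫ θ in (0:ℝ)..(2*Real.pi), Q θ) = 0 := integral_ratio R hR a w ha hw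
  have hQre : (∫ θ in (0:ℝ)..(2*Real.pi), (Q θ).re) = 0 := by
    have h := (Complex.reCLM : ℂ →L[ℝ] ℝ).intervalIntegral_comp_comm
      (hQcont.intervalIntegrable (μ := volume) 0 (2*Real.pi))
    rw [show (fun θ => (Q θ).re) = fun θ => Complex.reCLM (Q θ) from rfl, h, hQint]
    simp
  have hQim : (∫ θ in (0:ℝ)..(2*Real.pi), (Q θ).im) = 0 := by
    have h := (Complex.imCLM : ℂ →L[ℝ] ℝ).intervalIntegral_comp_comm
      (hQcont.intervalIntegrable (μ := volume) 0 (2*Real.pi))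
    rw [show (fun θ => (Q θ).im) = fun θ => Complex.imCLM (Q θ) from rfl, h, hQint]
    simp
  have hQreC : Continuous fun θ => (Q θ).re := Complex.continuous_re.comp hQcont
  have hQimC : Continuous fun θ => (Q θ).im := Complex.continuous_im.comp hQcont
  have hQre_pt : ∀ θ, (Q θ).re
      = ((z θ).re * (z θ).re - (z θ).im * (z θ).im) / Complex.normSq (z θ) := by
    intro θ
    rw [hQdef]
    simp [pow_two, Complex.div_ofReal, Complex.mul_re]
  have hQim_pt : ∀ θ, (Q θ).im
      = ((z θ).re * (z θ).im + (z θ).im * (z θ).re) / Complex.normSq (z θ) := by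
    intro θ
    rw [hQdef]
    simp [pow_two, Complex.div_ofReal, Complex.mul_im]
  have hnexp : ∀ θ, (z θ).re * (z θ).re + (z θ).im * (z θ).im ≠ 0 := by
    intro θ; rw [← Complex.normSq_apply]; exact hn_ne θ
  -- the three real integrals
  have h00 : (∫ θ in (0:ℝ)..(2*Real.pi),
      (z θ).re * (z θ).re / Complex.normSq (z θ)) = Real.pi := by
    have hpt : ∀ θ ∈ Set.uIcc (0:ℝ) (2*Real.pi),
        (z θ).re * (z θ).re / Complex.normSq (z θ) = 1/2 + (Q θ).re / 2 := by
      intro θ _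
      rw [hQre_pt θ, Complex.normSq_apply]
      field_simp [hnexp θ]
      have hd : (z θ).re ^ 2 + (z θ).im ^ 2 ≠ 0 := by simpa [pow_two] using hnexp θ
      field_simp
      ring
    rw [intervalIntegral.integral_congr hpt,
      intervalIntegral.integral_add intervalIntegrable_const
        ((hQreC.div_const 2).intervalIntegrable _ _),
      intervalIntegral.integral_div, intervalIntegral.integral_div, hQre]
    simp
  have h11 : (∫ θ in (0:ℝ)..(2*Real.pi),
      (z θ).im * (z θ).im / Complex.normSq (z θ)) = Real.pi := by
    have hpt : ∀ θ ∈ Set.uIcc (0:ℝ) (2*Real.pi),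
        (z θ).im * (z θ).im / Complex.normSq (z θ) = 1/2 - (Q θ).re / 2 := by
      intro θ _
      rw [hQre_pt θ, Complex.normSq_apply]
      field_simp [hnexp θ]
      have hd : (z θ).im ^ 2 + (z θ).re ^ 2 ≠ 0 := by rw [add_comm]; simpa [pow_two] using hnexp θ
      rw [show (1:ℝ) = ((z θ).im ^ 2 + (z θ).re ^ 2) * ((z θ).im ^ 2 + (z θ).re ^ 2)⁻¹ from (mul_inv_cancel₀ hd).symm]
      ring
    rw [intervalIntegral.integral_congr hpt,
      intervalIntegral.integral_sub intervalIntegrable_const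
        ((hQreC.div_const 2).intervalIntegrable _ _),
      intervalIntegral.integral_div, intervalIntegral.integral_div, hQre]
    simp
  have h01 : (∫ θ in (0:ℝ)..(2*Real.pi),
      (z θ).re * (z θ).im / Complex.normSq (z θ)) = 0 := by
    have hpt : ∀ θ ∈ Set.uIcc (0:ℝ) (2*Real.pi),
        (z θ).re * (z θ).im / Complex.normSq (z θ) = (Q θ).im / 2 := by
      intro θ _
      rw [hQim_pt θ, Complex.normSq_apply]
      field_simp [hnexp θ]
      ring
    rw [intervalIntegral.integral_congr hpt, intervalIntegral.integral_div, hQim]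
    simp
  have hlog : (∫ θ in (0:ℝ)..(2*Real.pi), Real.log ‖z θ‖)
      = 2 * Real.pi * Real.log R := integral_log_abs R hR a w ha hw
  -- coordinates of the Euclidean vector
  have hrepr0 : ∀ ζ : ℂ, (Complex.orthonormalBasisOneI.repr ζ) 0 = ζ.re := by
    intro ζ
    have := congrFun (congrArg (fun (x : Fin 2 → ℝ) (i : Fin 2) => x i)
      (Complex.orthonormalBasisOneI_repr_apply ζ)) 0
    simpa using this
  have hrepr1 : ∀ ζ : ℂ, (Complex.orthonormalBasisOneI.repr ζ) 1 = ζ.im := by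
    intro ζ
    have := congrFun (congrArg (fun (x : Fin 2 → ℝ) (i : Fin 2) => x i)
      (Complex.orthonormalBasisOneI_repr_apply ζ)) 1
    simpa using this
  have hnorm : ∀ ζ : ℂ, ‖Complex.orthonormalBasisOneI.repr ζ‖ = ‖ζ‖ := by
    intro ζ
    rw [LinearIsometryEquiv.norm_map]
  have hnorm2 : ∀ ζ : ℂ, ‖Complex.orthonormalBasisOneI.repr ζ‖ ^ 2 = Complex.normSq ζ := by
    intro ζ; rw [hnorm, Complex.sq_norm]
  -- entry functions
  have h00f : (fun θ => KelvinG0 lam mu (Complex.orthonormalBasisOneI.repr (z θ)) 0 0)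
      = fun θ => tau1 lam mu / (2*Real.pi) * Real.log ‖z θ‖
          - tau2 lam mu / (2*Real.pi) * ((z θ).re * (z θ).re / Complex.normSq (z θ)) := by
    funext θ
    simp only [KelvinG0, hnorm2, hnorm, Complex.sq_norm, hrepr0, hrepr1]
    norm_num
  have h01f : (fun θ => KelvinG0 lam mu (Complex.orthonormalBasisOneI.repr (z θ)) 0 1)
      = fun θ => - (tau2 lam mu / (2*Real.pi) * ((z θ).re * (z θ).im / Complex.normSq (z θ))) := by
    funext θ
    simp only [KelvinG0, hnorm2, hnorm, Complex.sq_norm, hrepr0, hrepr1]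
    norm_num
  have h10f : (fun θ => KelvinG0 lam mu (Complex.orthonormalBasisOneI.repr (z θ)) 1 0)
      = fun θ => - (tau2 lam mu / (2*Real.pi) * ((z θ).im * (z θ).re / Complex.normSq (z θ))) := by
    funext θ
    simp only [KelvinG0, hnorm2, hnorm, Complex.sq_norm, hrepr0, hrepr1]
    norm_num
  have h11f : (fun θ => KelvinG0 lam mu (Complex.orthonormalBasisOneI.repr (z θ)) 1 1)
      = fun θ => tau1 lam mu / (2*Real.pi) * Real.log ‖z θ‖
          - tau2 lam mu / (2*Real.pi) * ((z θ).im * (z θ).im / Complex.normSq (z θ)) := by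
    funext θ
    simp only [KelvinG0, hnorm2, hnorm, Complex.sq_norm, hrepr0, hrepr1]
    norm_num
  have hπ : Real.pi ≠ 0 := Real.pi_ne_zero
  -- entry integrals
  have hE00 : (∫ θ in (0:ℝ)..(2*Real.pi),
      KelvinG0 lam mu (Complex.orthonormalBasisOneI.repr (z θ)) 0 0) = 0 := by
    rw [h00f, intervalIntegral.integral_sub
        ((hlogcont.intervalIntegrable _ _).const_mul _) ((hc00.intervalIntegrable _ _).const_mul _),
      intervalIntegral.integral_const_mul, intervalIntegral.integral_const_mul, hlog, h00]
    have e1 : tau1 lam mu / (2*Real.pi) * (2*Real.pi*Real.log R) = tau1 lam mu * Real.log R := by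
      field_simp
    have e2 : tau2 lam mu / (2*Real.pi) * Real.pi = tau2 lam mu / 2 := by
      field_simp
    rw [e1, e2, heq, sub_self]
  have hE11 : (∫ θ in (0:ℝ)..(2*Real.pi),
      KelvinG0 lam mu (Complex.orthonormalBasisOneI.repr (z θ)) 1 1) = 0 := by
    rw [h11f, intervalIntegral.integral_sub
        ((hlogcont.intervalIntegrable _ _).const_mul _) ((hc11.intervalIntegrable _ _).const_mul _),
      intervalIntegral.integral_const_mul, intervalIntegral.integral_const_mul, hlog, h11]
    have e1 : tau1 lam mu / (2*Real.pi) * (2*Real.pi*Real.log R) = tau1 lam mu * Real.log R := by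
      field_simp
    have e2 : tau2 lam mu / (2*Real.pi) * Real.pi = tau2 lam mu / 2 := by
      field_simp
    rw [e1, e2, heq, sub_self]
  have hE01 : (∫ θ in (0:ℝ)..(2*Real.pi),
      KelvinG0 lam mu (Complex.orthonormalBasisOneI.repr (z θ)) 0 1) = 0 := by
    rw [h01f, intervalIntegral.integral_neg, intervalIntegral.integral_const_mul, h01]
    simp
  have hE10 : (∫ θ in (0:ℝ)..(2*Real.pi),
      KelvinG0 lam mu (Complex.orthonormalBasisOneI.repr (z θ)) 1 0) = 0 := by
    have h01' : (∫ θ in (0:ℝ)..(2*Real.pi),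
        (z θ).im * (z θ).re / Complex.normSq (z θ)) = 0 := by
      rw [show (fun θ => (z θ).im * (z θ).re / Complex.normSq (z θ))
          = fun θ => (z θ).re * (z θ).im / Complex.normSq (z θ) by funext θ; ring]
      exact h01
    rw [h10f, intervalIntegral.integral_neg, intervalIntegral.integral_const_mul, h01']
    simp
  -- continuity of entries
  have hcont00 : Continuous
      (fun θ => KelvinG0 lam mu (Complex.orthonormalBasisOneI.repr (z θ)) 0 0) := by
    rw [h00f]; exact (continuous_const.mul hlogcont).sub (continuous_const.mul hc00)
  have hcont01 : Continuous
      (fun θ => KelvinG0 lam mu (Complex.orthonormalBasisOneI.repr (z θ)) 0 1) := by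
    rw [h01f]; exact (continuous_const.mul hc01).neg
  have hcont10 : Continuous
      (fun θ => KelvinG0 lam mu (Complex.orthonormalBasisOneI.repr (z θ)) 1 0) := by
    rw [h10f]; exact (continuous_const.mul ((himcont.mul hrecont).div hncont hn_ne)).neg
  have hcont11 : Continuous
      (fun θ => KelvinG0 lam mu (Complex.orthonormalBasisOneI.repr (z θ)) 1 1) := by
    rw [h11f]; exact (continuous_const.mul hlogcont).sub (continuous_const.mul hc11)
  have hI00 := (hcont00.intervalIntegrable (μ := volume) 0 (2*Real.pi))
  have hI01 := (hcont01.intervalIntegrable (μ := volume) 0 (2*Real.pi))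
  have hI10 := (hcont10.intervalIntegrable (μ := volume) 0 (2*Real.pi))
  have hI11 := (hcont11.intervalIntegrable (μ := volume) 0 (2*Real.pi))
  have hg0int : (∫ θ in (0:ℝ)..(2*Real.pi),
      (KelvinG0 lam mu (Complex.orthonormalBasisOneI.repr (z θ)) 0 0 * v 0
        + KelvinG0 lam mu (Complex.orthonormalBasisOneI.repr (z θ)) 0 1 * v 1)) = 0 := by
    rw [intervalIntegral.integral_add (hI00.mul_const _) (hI01.mul_const _),
      intervalIntegral.integral_mul_const, intervalIntegral.integral_mul_const, hE00, hE01]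
    simp
  have hg1int : (∫ θ in (0:ℝ)..(2*Real.pi),
      (KelvinG0 lam mu (Complex.orthonormalBasisOneI.repr (z θ)) 1 0 * v 0
        + KelvinG0 lam mu (Complex.orthonormalBasisOneI.repr (z θ)) 1 1 * v 1)) = 0 := by
    rw [intervalIntegral.integral_add (hI10.mul_const _) (hI11.mul_const _),
      intervalIntegral.integral_mul_const, intervalIntegral.integral_mul_const, hE10, hE11]
    simp
  have hGdecomp : (fun θ => (KelvinG0 lam mu (Complex.orthonormalBasisOneI.repr (z θ))).mulVec v)
      = fun θ =>
        (KelvinG0 lam mu (Complex.orthonormalBasisOneI.repr (z θ)) 0 0 * v 0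
          + KelvinG0 lam mu (Complex.orthonormalBasisOneI.repr (z θ)) 0 1 * v 1)
            • (![1,0] : Fin 2 → ℝ)
        + (KelvinG0 lam mu (Complex.orthonormalBasisOneI.repr (z θ)) 1 0 * v 0
          + KelvinG0 lam mu (Complex.orthonormalBasisOneI.repr (z θ)) 1 1 * v 1)
            • (![0,1] : Fin 2 → ℝ) := by
    funext θ
    funext i
    fin_cases i <;>
      simp [Matrix.mulVec, dotProduct, Fin.sum_univ_two]
  rw [hGdecomp, intervalIntegral.integral_add ?_ ?_,
    intervalIntegral.integral_smul_const, intervalIntegral.integral_smul_const,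
    hg0int, hg1int]
  simp
  · exact (((hcont00.mul continuous_const).add (hcont01.mul continuous_const)).smul
        continuous_const).intervalIntegrable _ _
  · exact (((hcont10.mul continuous_const).add (hcont11.mul continuous_const)).smul
        continuous_const).intervalIntegrable _ _

lemma kelvin_measurable (lam mu : ℝ) (x : EuclideanSpace ℝ (Fin 2)) (v : Fin 2 → ℝ) :
    Measurable (fun y : EuclideanSpace ℝ (Fin 2) => (KelvinG0 lam mu (x - y)).mulVec v) := by
  have hsub : Continuous fun y : EuclideanSpace ℝ (Fin 2) => x - y :=
    continuous_const.sub continuous_id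
  have hent : ∀ i j : Fin 2, Measurable fun y : EuclideanSpace ℝ (Fin 2) =>
      KelvinG0 lam mu (x - y) i j := by
    intro i j
    unfold KelvinG0
    apply Measurable.sub
    · apply Measurable.const_mul
      by_cases h : i = j
      · simp only [if_pos h]
        exact Real.measurable_log.comp hsub.norm.measurable
      · simp only [if_neg h]
        exact measurable_const
    · apply Measurable.const_mul
      apply Measurable.div
      · exact (((EuclideanSpace.proj i).continuous.comp hsub).mul
          ((EuclideanSpace.proj j).continuous.comp hsub)).measurable
      · exact (hsub.norm.pow 2).measurable
  apply measurable_pi_lambda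
  intro i
  simp only [Matrix.mulVec, dotProduct, Fin.sum_univ_two]
  exact ((hent i 0).mul measurable_const).add ((hent i 1).mul measurable_const)

private lemma kelvin_continuousOn (lam mu : ℝ) (x : EuclideanSpace ℝ (Fin 2)) (v : Fin 2 → ℝ)
    (s : Set (EuclideanSpace ℝ (Fin 2))) (hs : ∀ y ∈ s, x - y ≠ 0) :
    ContinuousOn (fun y : EuclideanSpace ℝ (Fin 2) => (KelvinG0 lam mu (x - y)).mulVec v) s := by
  have hns : ∀ y ∈ s, ‖x - y‖ ≠ 0 := fun y hy => norm_ne_zero_iff.2 (hs y hy)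
  have hsub : Continuous fun y : EuclideanSpace ℝ (Fin 2) => x - y :=
    continuous_const.sub continuous_id
  have hlog : ContinuousOn (fun y : EuclideanSpace ℝ (Fin 2) => Real.log ‖x - y‖) s := by
    apply Real.continuousOn_log.comp hsub.norm.continuousOn
    intro y hy
    simpa using hns y hy
  have hent : ∀ i j : Fin 2, ContinuousOn
      (fun y : EuclideanSpace ℝ (Fin 2) => KelvinG0 lam mu (x - y) i j) s := by
    intro i j
    unfold KelvinG0
    apply ContinuousOn.sub
    · apply continuousOn_const.mul
      by_cases h : i = j
      · simp only [if_pos h]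
        exact hlog
      · simp only [if_neg h]
        exact continuousOn_const
    · apply continuousOn_const.mul
      apply ContinuousOn.div
      · exact (((EuclideanSpace.proj i).continuous.comp hsub).mul
          ((EuclideanSpace.proj j).continuous.comp hsub)).continuousOn
      · exact (hsub.norm.pow 2).continuousOn
      · intro y hy
        exact pow_ne_zero 2 (hns y hy)
  apply continuousOn_pi.2
  intro i
  simp only [Matrix.mulVec, dotProduct, Fin.sum_univ_two]
  exact ((hent i 0).mul continuousOn_const).add ((hent i 1).mul continuousOn_const)

private theorem main_part (R lam mu : ℝ) (hR : 0 < R)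
    (heq : tau1 lam mu * Real.log R = tau2 lam mu / 2)
    (v : Fin 2 → ℝ) (x : EuclideanSpace ℝ (Fin 2))
    (hx : x ∈ Metric.ball (0 : EuclideanSpace ℝ (Fin 2)) R) :
    (∫ y in Metric.sphere (0 : EuclideanSpace ℝ (Fin 2)) R,
        (KelvinG0 lam mu (x - y)).mulVec v ∂μH[1]) = 0 := by
  classical
  set L := Complex.orthonormalBasisOneI.repr with hLdef
  set g : EuclideanSpace ℝ (Fin 2) → (Fin 2 → ℝ) :=
    fun y => (KelvinG0 lam mu (x - y)).mulVec v with hgdef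
  have hgm : Measurable g := kelvin_measurable lam mu x v
  have hLmeas : Measurable (⇑L) := L.continuous.measurable
  have hSmeas : MeasurableSet (Metric.sphere (0 : EuclideanSpace ℝ (Fin 2)) R) :=
    (isClosed_sphere).measurableSet
  have hSCmeas : MeasurableSet (Metric.sphere (0 : ℂ) R) := (isClosed_sphere).measurableSet
  -- transfer Hausdorff measure along L
  have h1 : Measure.map (⇑L) (μH[1] : Measure ℂ) = (μH[1] : Measure (EuclideanSpace ℝ (Fin 2))) := by
    have h := L.toIsometryEquiv.map_hausdorffMeasure (1 : ℝ)
    simpa using h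
  have hpre : (⇑L) ⁻¹' (Metric.sphere (0 : EuclideanSpace ℝ (Fin 2)) R)
      = Metric.sphere (0 : ℂ) R := by
    ext w
    simp only [Set.mem_preimage, mem_sphere_iff_norm, sub_zero]
    rw [L.norm_map]
  have step1 : (∫ y in Metric.sphere (0 : EuclideanSpace ℝ (Fin 2)) R, g y ∂μH[1])
      = ∫ w in Metric.sphere (0 : ℂ) R, g (L w) ∂μH[1] := by
    rw [← h1, Measure.restrict_map hLmeas hSmeas, hpre,
      integral_map hLmeas.aemeasurable hgm.aestronglyMeasurable]
  rw [step1]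
  -- the measure on the circle
  set ν : Measure ℂ := (μH[1] : Measure ℂ).restrict (Metric.sphere (0 : ℂ) R) with hνdef
  -- finiteness
  have hfin : (μH[1] : Measure ℂ) (Metric.sphere (0 : ℂ) R) < ⊤ := by
    have h2 : Metric.sphere (0 : ℂ) R = circleMap 0 R '' Set.Ioc 0 (0 + 2 * Real.pi) := by
      rw [(periodic_circleMap 0 R).image_Ioc Real.two_pi_pos 0, range_circleMap,
        abs_of_pos hR]
    rw [h2]
    have h3 := (lipschitzWith_circleMap 0 R).hausdorffMeasure_image_le zero_le_one
      (Set.Ioc (0:ℝ) (0 + 2 * Real.pi))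
    apply lt_of_le_of_lt h3
    rw [MeasureTheory.hausdorffMeasure_real]
    apply ENNReal.mul_lt_top
    · simp
    · exact measure_Ioc_lt_top
  haveI hνfin : IsFiniteMeasure ν := by
    constructor
    rw [hνdef, Measure.restrict_apply_univ]
    exact hfin
  set F : ℂ → (Fin 2 → ℝ) := fun w => g (L w) with hFdef
  have hFm : Measurable F := hgm.comp hLmeas
  -- rotation invariance
  have hrot : ∀ θ : ℝ, (∫ w, F (Complex.exp (θ * Complex.I) * w) ∂ν) = ∫ w, F w ∂ν := by
    intro θ
    set e := (rotation (Circle.exp θ)).toIsometryEquiv with hedef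
    have hecoe : ∀ w : ℂ, e w = Complex.exp (θ * Complex.I) * w := by
      intro w
      rw [hedef]
      show (rotation (Circle.exp θ)) w = _
      rw [rotation_apply, Circle.coe_exp]
    have hmape : Measure.map (⇑e) (μH[1] : Measure ℂ) = μH[1] :=
      e.map_hausdorffMeasure 1
    have hepre : (⇑e) ⁻¹' (Metric.sphere (0 : ℂ) R) = Metric.sphere (0 : ℂ) R := by
      ext w
      simp only [Set.mem_preimage, mem_sphere_iff_norm, sub_zero, hecoe w]
      rw [norm_mul]
      simp [Complex.norm_exp_ofReal_mul_I]
    have hem : Measurable (⇑e) := e.continuous.measurable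
    calc (∫ w, F (Complex.exp (θ * Complex.I) * w) ∂ν)
        = ∫ w, F (e w) ∂((μH[1] : Measure ℂ).restrict ((⇑e) ⁻¹' (Metric.sphere (0:ℂ) R))) := by
          rw [hepre]
          apply MeasureTheory.integral_congr_ae
          filter_upwards with w
          rw [hecoe w]
      _ = ∫ w, F w ∂(Measure.map (⇑e) ((μH[1] : Measure ℂ).restrict
            ((⇑e) ⁻¹' (Metric.sphere (0:ℂ) R)))) := by
          rw [integral_map hem.aemeasurable (hFm.aestronglyMeasurable)]
      _ = ∫ w, F w ∂ν := by
          rw [← Measure.restrict_map hem hSCmeas, hmape]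
  -- the uniform bound on the sphere
  have hxa : ‖x‖ < R := by simpa [mem_ball_zero_iff] using hx
  have hgc : ContinuousOn g (Metric.sphere (0 : EuclideanSpace ℝ (Fin 2)) R) := by
    apply kelvin_continuousOn
    intro y hy h0
    have h2 : x = y := by
      have := sub_eq_zero.1 h0; exact this
    rw [mem_sphere_iff_norm, sub_zero] at hy
    rw [h2, hy] at hxa
    exact lt_irrefl _ hxa
  obtain ⟨C, hC⟩ := (isCompact_sphere (0 : EuclideanSpace ℝ (Fin 2)) R).exists_bound_of_continuousOn hgc
  have hCsphere : ∀ w : ℂ, ‖w‖ = R → ‖F w‖ ≤ C := by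
    intro w hw
    apply hC
    rw [mem_sphere_iff_norm, sub_zero, L.norm_map, hw]
  -- Fubini setup
  set μI : Measure ℝ := volume.restrict (Set.Icc 0 (2 * Real.pi)) with hμIdef
  haveI : IsFiniteMeasure μI := by
    constructor
    rw [hμIdef, Measure.restrict_apply_univ]
    exact measure_Icc_lt_top
  set H : ℝ → ℂ → (Fin 2 → ℝ) := fun θ w => F (Complex.exp (θ * Complex.I) * w) with hHdef
  have hHmeas : Measurable (Function.uncurry H) := by
    apply hFm.comp
    have : Continuous fun p : ℝ × ℂ => Complex.exp (p.1 * Complex.I) * p.2 := by fun_prop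
    exact this.measurable
  have hae : ∀ᵐ p : ℝ × ℂ ∂(μI.prod ν), p.2 ∈ Metric.sphere (0:ℂ) R := by
    have h0 : (μI.prod ν) {p : ℝ × ℂ | p.2 ∉ Metric.sphere (0:ℂ) R} = 0 := by
      have h2 : {p : ℝ × ℂ | p.2 ∉ Metric.sphere (0:ℂ) R}
          = Set.univ ×ˢ (Metric.sphere (0:ℂ) R)ᶜ := by
        ext p; simp
      rw [h2, Measure.prod_prod]
      have h3 : ν (Metric.sphere (0:ℂ) R)ᶜ = 0 := by
        rw [hνdef, Measure.restrict_apply hSCmeas.compl]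
        simp
      rw [h3, mul_zero]
    exact h0
  have hint : Integrable (Function.uncurry H) (μI.prod ν) := by
    apply Integrable.mono' (integrable_const C) hHmeas.aestronglyMeasurable
    filter_upwards [hae] with p hp
    rw [hHdef]
    apply hCsphere
    rw [mem_sphere_iff_norm, sub_zero] at hp
    rw [norm_mul, Complex.norm_exp_ofReal_mul_I, one_mul]
    exact hp
  have hswap := MeasureTheory.integral_integral_swap (μ := μI) (ν := ν) (f := H) hint
  -- LHS of swap
  have hLHS : (∫ θ, ∫ w, H θ w ∂ν ∂μI) = (2 * Real.pi) • ∫ w, F w ∂ν := by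
    have hcong : (∫ θ, ∫ w, H θ w ∂ν ∂μI) = ∫ _θ, (∫ w, F w ∂ν) ∂μI := by
      apply MeasureTheory.integral_congr_ae
      filter_upwards with θ
      exact hrot θ
    rw [hcong, MeasureTheory.integral_const]
    congr 1
    rw [hμIdef, Measure.real, Measure.restrict_apply_univ, Real.volume_Icc]
    rw [ENNReal.toReal_ofReal (by linarith [Real.pi_pos])]
    ring
  -- RHS of swap is zero
  have hax : ‖L.symm x‖ < R := by
    rw [L.symm.norm_map]
    exact hxa
  have hRHS : (∫ w, ∫ θ, H θ w ∂μI ∂ν) = 0 := by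
    have hz : ∀ᵐ w ∂ν, (∫ θ, H θ w ∂μI) = 0 := by
      filter_upwards [ae_restrict_mem hSCmeas] with w hw
      rw [mem_sphere_iff_norm, sub_zero] at hw
      have hwabs : ‖w‖ = R := hw
      have hkey := kelvin_key lam mu R hR heq v (L.symm x) w hax hwabs
      have hHw : ∀ θ : ℝ, H θ w = (KelvinG0 lam mu (L (L.symm x - Complex.exp (θ * Complex.I) * w))).mulVec v := by
        intro θ
        rw [hHdef, hFdef, hgdef]
        rw [map_sub, L.apply_symm_apply]
      rw [hμIdef, MeasureTheory.integral_Icc_eq_integral_Ioc,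
        ← intervalIntegral.integral_of_le (by positivity)]
      rw [intervalIntegral.integral_congr (fun θ _ => hHw θ)]
      exact hkey
    rw [MeasureTheory.integral_congr_ae hz, MeasureTheory.integral_zero]
  rw [hLHS, hRHS] at hswap
  have h2π : (2 * Real.pi) ≠ 0 := by positivity
  rcases smul_eq_zero.1 hswap with h | h
  · exact absurd h h2π
  · exact h

/-- If `τ₁ ln R = τ₂/2`, then for every constant vector `v ∈ ℝ²` and every `x` in the
open disk, `∫_{∂D} G⁰(x − y) v dσ(y) = 0`. In particular, the elastostatic single-layer
operator on the disk annihilates all constant densities (and hence is not injective):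
there is a nonzero constant density annihilated by it. -/
theorem kelvin_single_layer_degenerate (R lam mu : ℝ) (hR : 0 < R)
    (hmu : 0 < mu) (hlm : 0 < lam + mu)
    (heq : tau1 lam mu * Real.log R = tau2 lam mu / 2) :
    (∀ v : Fin 2 → ℝ, ∀ x ∈ Metric.ball (0 : EuclideanSpace ℝ (Fin 2)) R,
        (∫ y in Metric.sphere (0 : EuclideanSpace ℝ (Fin 2)) R,
            (KelvinG0 lam mu (x - y)).mulVec v ∂μH[1]) = 0)
    ∧ ∃ v : Fin 2 → ℝ, v ≠ 0 ∧
        ∀ x ∈ Metric.ball (0 : EuclideanSpace ℝ (Fin 2)) R,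
          (∫ y in Metric.sphere (0 : EuclideanSpace ℝ (Fin 2)) R,
              (KelvinG0 lam mu (x - y)).mulVec v ∂μH[1]) = 0 := by
  constructor
  · intro v x hx
    exact main_part R lam mu hR heq v x hx
  · refine ⟨fun _ => 1, ?_, fun x hx => main_part R lam mu hR heq _ x hx⟩
    intro h
    simpa using congrFun h 0
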